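/- Let d ≥ 1, let H and H_S be d×d real symmetric positive definite matrices, let g ∈ ℝ^d, and let ε ∈ (0, 1/4). Define C_S := H^{-1/2} H_S H^{-1/2}, v_ne := -H^{-1} g and v_nsk := -H_S^{-1} g. If (1 - ε/2)·I_d ⪯ C_S ⪯ (1 + ε/2)·I_d, then √((v_ne - v_nsk)ᵀ H (v_ne - v_nsk)) ≤ ε · √(v_neᵀ H v_ne), i.e. ‖v_ne - v_nsk‖_H ≤ ε‖v_ne‖_H. (First conclusion of Theorem 1, Closeness of Newton decrements.) -/

import Mathlib

open Matrix

section OldSqrt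
open scoped ComplexOrder

/-- The old Mathlib `Matrix.PosSemidef.sqrt` (removed since), with its original definition. -/
noncomputable def Matrix.PosSemidef.sqrt {n 𝕜 : Type*} [Fintype n] [DecidableEq n] [RCLike 𝕜]
    {A : Matrix n n 𝕜} (hA : A.PosSemidef) : Matrix n n 𝕜 :=
  hA.1.eigenvectorUnitary.1 * diagonal ((↑) ∘ (√·) ∘ hA.1.eigenvalues) *
    (star hA.1.eigenvectorUnitary : Matrix n n 𝕜)

end OldSqrt

section Aux
variable {n : Type*} [Fintype n]

private lemma sym_dot' {B : Matrix n n ℝ} (hB : B.IsHermitian) (x y : n → ℝ) :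
    x ⬝ᵥ B *ᵥ y = y ⬝ᵥ B *ᵥ x := by
  have hBt : Bᵀ = B := by simpa using hB.eq
  rw [dotProduct_comm, dotProduct_mulVec, ← mulVec_transpose, hBt]

private lemma psd_cauchy' {B : Matrix n n ℝ} (hB : B.PosSemidef) (x y : n → ℝ) :
    (x ⬝ᵥ B *ᵥ y)^2 ≤ (x ⬝ᵥ B *ᵥ x) * (y ⬝ᵥ B *ᵥ y) := by
  set a := y ⬝ᵥ B *ᵥ y
  set b := x ⬝ᵥ B *ᵥ y
  set c := x ⬝ᵥ B *ᵥ x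
  have key : ∀ t : ℝ, 0 ≤ a * (t * t) + (2 * b) * t + c := by
    intro t
    have h := hB.dotProduct_mulVec_nonneg (x + t • y)
    simp only [star_trivial, mulVec_add, mulVec_smul, dotProduct_add, add_dotProduct,
      dotProduct_smul, smul_dotProduct, smul_eq_mul] at h
    have hyx : y ⬝ᵥ B *ᵥ x = b := sym_dot' hB.1 y x
    rw [hyx] at h
    linarith [h]
  have hd := discrim_le_zero key
  rw [discrim] at hd
  nlinarith [hd]

private lemma dot_self_nonneg' (x : n → ℝ) : 0 ≤ x ⬝ᵥ x :=
  Finset.sum_nonneg fun _ _ => mul_self_nonneg _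

private lemma inv_upper' [DecidableEq n] {C : Matrix n n ℝ} (hC : C.PosDef) {c : ℝ} (hc : 0 < c)
    (h : ∀ x, c * (x ⬝ᵥ x) ≤ x ⬝ᵥ C *ᵥ x) (x : n → ℝ) :
    x ⬝ᵥ C⁻¹ *ᵥ x ≤ c⁻¹ * (x ⬝ᵥ x) := by
  set y := C⁻¹ *ᵥ x with hy
  have hCy : C *ᵥ y = x := by
    rw [hy, mulVec_mulVec, mul_nonsing_inv _ hC.det_pos.ne'.isUnit, one_mulVec]
  have h1 : c * (y ⬝ᵥ y) ≤ x ⬝ᵥ y := by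
    have := h y; rw [hCy] at this
    calc c * (y ⬝ᵥ y) ≤ y ⬝ᵥ x := this
    _ = x ⬝ᵥ y := dotProduct_comm _ _
  have h2 : (x ⬝ᵥ y)^2 ≤ (x ⬝ᵥ x) * (y ⬝ᵥ y) := by
    have := psd_cauchy' (Matrix.PosSemidef.one) x y
    simpa using this
  have hp : 0 ≤ x ⬝ᵥ y := by
    have := hC.posSemidef.dotProduct_mulVec_nonneg y
    rw [star_trivial, hCy, dotProduct_comm] at this; exact this
  rcases eq_or_lt_of_le hp with hp0 | hppos
  · rw [← hp0]; exact mul_nonneg (inv_nonneg.2 hc.le) (dot_self_nonneg' x)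
  · rw [inv_mul_eq_div, le_div_iff₀ hc]
    nlinarith [h1, h2, hppos, dot_self_nonneg' x, dot_self_nonneg' y]

private lemma inv_lower' [DecidableEq n] {C : Matrix n n ℝ} (hC : C.PosDef) {c : ℝ} (hc : 0 < c)
    (h : ∀ x, x ⬝ᵥ C *ᵥ x ≤ c * (x ⬝ᵥ x)) (x : n → ℝ) :
    c⁻¹ * (x ⬝ᵥ x) ≤ x ⬝ᵥ C⁻¹ *ᵥ x := by
  set z := C⁻¹ *ᵥ x with hz
  have hCz : C *ᵥ z = x := by
    rw [hz, mulVec_mulVec, mul_nonsing_inv _ hC.det_pos.ne'.isUnit, one_mulVec]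
  have hq : z ⬝ᵥ C *ᵥ z = x ⬝ᵥ z := by rw [hCz, dotProduct_comm]
  have hxz : x ⬝ᵥ z = x ⬝ᵥ C⁻¹ *ᵥ x := rfl
  have hcs : (x ⬝ᵥ x)^2 ≤ (x ⬝ᵥ C *ᵥ x) * (x ⬝ᵥ z) := by
    have := psd_cauchy' hC.posSemidef x z
    rw [hCz, dotProduct_comm z x] at this; exact this
  have hq0 : 0 ≤ x ⬝ᵥ z := by
    have := hC.posSemidef.dotProduct_mulVec_nonneg z; rw [star_trivial, hq] at this; exact this
  have hup : x ⬝ᵥ C *ᵥ x ≤ c * (x ⬝ᵥ x) := h x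
  rcases eq_or_lt_of_le (dot_self_nonneg' x) with hx0 | hxpos
  · rw [← hxz]
    calc c⁻¹ * (x ⬝ᵥ x) = 0 := by rw [← hx0]; ring
    _ ≤ x ⬝ᵥ z := hq0
  · rw [← hxz, inv_mul_eq_div, div_le_iff₀ hc]
    nlinarith [hcs, hup, hq0, hxpos, hC.posSemidef.dotProduct_mulVec_nonneg x]

private lemma opnorm_bound' {M : Matrix n n ℝ} (hM : M.IsHermitian) {e : ℝ} (he : 0 ≤ e)
    (h1 : ∀ x, x ⬝ᵥ M *ᵥ x ≤ e * (x ⬝ᵥ x))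
    (h2 : ∀ x, -(e * (x ⬝ᵥ x)) ≤ x ⬝ᵥ M *ᵥ x)
    (x : n → ℝ) : (M *ᵥ x) ⬝ᵥ (M *ᵥ x) ≤ e^2 * (x ⬝ᵥ x) := by
  set y := M *ᵥ x with hy
  set a := x ⬝ᵥ x with ha
  set b := y ⬝ᵥ y with hb
  have ha0 : 0 ≤ a := dot_self_nonneg' x
  have hb0 : 0 ≤ b := dot_self_nonneg' y
  rcases eq_or_lt_of_le hb0 with hb0' | hbpos
  · rw [← hb0']; positivity
  have hapos : 0 < a := by
    rcases eq_or_lt_of_le ha0 with ha0' | hh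
    · exfalso
      have hx0 : x = 0 := by rwa [ha, eq_comm, dotProduct_self_eq_zero] at ha0'
      have : y = 0 := by rw [hy, hx0, mulVec_zero]
      rw [hb, this] at hbpos; simp at hbpos
    · exact hh
  set α := Real.sqrt b with hαdef
  set β := Real.sqrt a with hβdef
  have hαpos : 0 < α := Real.sqrt_pos.2 hbpos
  have hβpos : 0 < β := Real.sqrt_pos.2 hapos
  have hα : α * α = b := Real.mul_self_sqrt hb0
  have hβ : β * β = a := Real.mul_self_sqrt ha0
  have hu := h1 (α • x + β • y)
  have hv := h2 (α • x - β • y)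
  simp only [mulVec_add, mulVec_sub, mulVec_smul, dotProduct_add, add_dotProduct,
    dotProduct_sub, sub_dotProduct, dotProduct_smul, smul_dotProduct, smul_eq_mul] at hu hv
  have hq1 : y ⬝ᵥ M *ᵥ x = b := by rw [← hy]
  have hq2 : x ⬝ᵥ M *ᵥ y = b := by rw [sym_dot' hM x y]
  have hyx : y ⬝ᵥ x = x ⬝ᵥ y := dotProduct_comm _ _
  rw [hq1, hq2, hyx, ← ha] at hu hv
  rw [← hα, ← hβ] at hu hv
  have hkey : α ≤ e * β := by
    nlinarith [hu, hv, hα, hβ, mul_pos (mul_pos hαpos hαpos) hβpos, hαpos, hβpos]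
  calc b = α * α := hα.symm
  _ ≤ (e * β) * (e * β) := by nlinarith [hkey, hαpos.le]
  _ = e^2 * a := by rw [← hβ]; ring

private lemma sqrt_posSemidef' [DecidableEq n] {A : Matrix n n ℝ} (hA : A.PosSemidef) :
    (Matrix.PosSemidef.sqrt hA).PosSemidef := by
  unfold Matrix.PosSemidef.sqrt
  have hD : (diagonal ((↑) ∘ (√·) ∘ hA.1.eigenvalues) : Matrix n n ℝ).PosSemidef :=
    PosSemidef.diagonal (fun i => by simp [Real.sqrt_nonneg])
  exact hD.mul_mul_conjTranspose_same (hA.1.eigenvectorUnitary : Matrix n n ℝ)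

private lemma sqrt_mul_self' [DecidableEq n] {A : Matrix n n ℝ} (hA : A.PosSemidef) :
    Matrix.PosSemidef.sqrt hA * Matrix.PosSemidef.sqrt hA = A := by
  unfold Matrix.PosSemidef.sqrt
  set U := hA.1.eigenvectorUnitary
  have hU : (star U : Matrix n n ℝ) * (U : Matrix n n ℝ) = 1 := Unitary.coe_star_mul_self U
  set D : Matrix n n ℝ := diagonal ((↑) ∘ (√·) ∘ hA.1.eigenvalues)
  calc (U : Matrix n n ℝ) * D * (star U : Matrix n n ℝ) * ((U : Matrix n n ℝ) * D * (star U : Matrix n n ℝ))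
      = (U : Matrix n n ℝ) * (D * D) * (star U : Matrix n n ℝ) := by
        simp only [Matrix.mul_assoc]
        rw [← Matrix.mul_assoc (star U : Matrix n n ℝ) (U : Matrix n n ℝ), hU, Matrix.one_mul]
  _ = A := by
        conv_rhs => rw [hA.1.spectral_theorem]
        rw [Unitary.conjStarAlgAut_apply]
        congr 2
        simp only [D, diagonal_mul_diagonal]
        congr 1
        funext i
        simp [Real.mul_self_sqrt (hA.eigenvalues_nonneg i)]

end Aux

set_option maxHeartbeats 1000000 in
/-- **Closeness of Newton directions** (first conclusion of Theorem 1).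
If `(1 - ε/2) I ⪯ C_S ⪯ (1 + ε/2) I` with `C_S = H^{-1/2} H_S H^{-1/2}`, then
`‖v_ne - v_nsk‖_H ≤ ε ‖v_ne‖_H`. -/
theorem closeness_newton_directions
    (d : ℕ) (hd : 1 ≤ d)
    (H HS : Matrix (Fin d) (Fin d) ℝ)
    (hH : H.PosDef) (hHS : HS.PosDef)
    (g : Fin d → ℝ) (ε : ℝ) (hε : ε ∈ Set.Ioo (0 : ℝ) (1/4))
    (CS : Matrix (Fin d) (Fin d) ℝ)
    (hCS : CS = (Matrix.PosSemidef.sqrt hH.posSemidef)⁻¹ * HS * (Matrix.PosSemidef.sqrt hH.posSemidef)⁻¹)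
    (vne vnsk : Fin d → ℝ)
    (hvne : vne = -(H⁻¹ *ᵥ g)) (hvnsk : vnsk = -(HS⁻¹ *ᵥ g))
    (hlo : (CS - (1 - ε/2) • (1 : Matrix (Fin d) (Fin d) ℝ)).PosSemidef)
    (hhi : ((1 + ε/2) • (1 : Matrix (Fin d) (Fin d) ℝ) - CS).PosSemidef) :
    Real.sqrt ((vne - vnsk) ⬝ᵥ (H *ᵥ (vne - vnsk))) ≤
      ε * Real.sqrt (vne ⬝ᵥ (H *ᵥ vne)) := by
  obtain ⟨hε0, hε4⟩ := hε
  set S := Matrix.PosSemidef.sqrt hH.posSemidef with hSdef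
  have hSps : S.PosSemidef := sqrt_posSemidef' hH.posSemidef
  have hSmul : S * S = H := sqrt_mul_self' hH.posSemidef
  have hSsym : Sᵀ = S := by simpa using hSps.1.eq
  -- determinants
  have hdetS : IsUnit S.det := by
    have hdd : S.det * S.det = H.det := by rw [← det_mul, hSmul]
    have hHd := hH.det_pos
    refine isUnit_iff_ne_zero.2 fun h0 => ?_
    rw [h0, mul_zero] at hdd
    rw [← hdd] at hHd; exact lt_irrefl _ hHd
  have hSinv : S⁻¹ * S = 1 := nonsing_inv_mul _ hdetS
  have hSinv' : S * S⁻¹ = 1 := mul_nonsing_inv _ hdetS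
  have hHSinv' : HS * HS⁻¹ = 1 := mul_nonsing_inv _ hHS.det_pos.ne'.isUnit
  have hHinv' : H * H⁻¹ = 1 := mul_nonsing_inv _ hH.det_pos.ne'.isUnit
  -- quadratic bounds on CS
  have hc1 : (0:ℝ) < 1 - ε/2 := by linarith
  have hc2 : (0:ℝ) < 1 + ε/2 := by linarith
  have hq_lo : ∀ x, (1 - ε/2) * (x ⬝ᵥ x) ≤ x ⬝ᵥ CS *ᵥ x := by
    intro x
    have := hlo.dotProduct_mulVec_nonneg x
    simp only [star_trivial, sub_mulVec, smul_mulVec, one_mulVec, dotProduct_sub,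
      dotProduct_smul, smul_eq_mul] at this
    linarith
  have hq_hi : ∀ x, x ⬝ᵥ CS *ᵥ x ≤ (1 + ε/2) * (x ⬝ᵥ x) := by
    intro x
    have := hhi.dotProduct_mulVec_nonneg x
    simp only [star_trivial, sub_mulVec, smul_mulVec, one_mulVec, dotProduct_sub,
      dotProduct_smul, smul_eq_mul] at this
    linarith
  -- CS is positive definite
  have hCSH : CS.IsHermitian := by
    rw [hCS]
    nth_rewrite 1 [← hSps.1.inv.eq]
    exact isHermitian_conjTranspose_mul_mul _ hHS.1
  have hCSpd : CS.PosDef := by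
    refine PosDef.of_dotProduct_mulVec_pos hCSH fun x hx => ?_
    rw [star_trivial]
    have hxx : 0 < x ⬝ᵥ x :=
      lt_of_le_of_ne (dot_self_nonneg' x) fun h => hx (dotProduct_self_eq_zero.1 h.symm)
    calc (0:ℝ) < (1 - ε/2) * (x ⬝ᵥ x) := mul_pos hc1 hxx
    _ ≤ x ⬝ᵥ CS *ᵥ x := hq_lo x
  -- M := 1 - CS⁻¹
  set M : Matrix (Fin d) (Fin d) ℝ := 1 - CS⁻¹ with hMdef
  have hMH : M.IsHermitian := isHermitian_one.sub hCSH.inv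
  have hMx : ∀ x, x ⬝ᵥ M *ᵥ x = x ⬝ᵥ x - x ⬝ᵥ CS⁻¹ *ᵥ x := by
    intro x
    rw [hMdef, sub_mulVec, one_mulVec, dotProduct_sub]
  have h_up : ∀ x, x ⬝ᵥ M *ᵥ x ≤ ε * (x ⬝ᵥ x) := by
    intro x
    have h := inv_lower' hCSpd hc2 hq_hi x
    have hinv : (1 + ε/2) * (1 + ε/2)⁻¹ = 1 := mul_inv_cancel₀ hc2.ne'
    have hs : 1 - (1 + ε/2)⁻¹ ≤ ε := by nlinarith [hinv]
    have := dot_self_nonneg' x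
    rw [hMx x]; nlinarith [h, hs, this]
  have h_low : ∀ x, -(ε * (x ⬝ᵥ x)) ≤ x ⬝ᵥ M *ᵥ x := by
    intro x
    have h := inv_upper' hCSpd hc1 hq_lo x
    have hinv : (1 - ε/2) * (1 - ε/2)⁻¹ = 1 := mul_inv_cancel₀ hc1.ne'
    have hs : (1 - ε/2)⁻¹ - 1 ≤ ε := by nlinarith [hinv]
    have := dot_self_nonneg' x
    rw [hMx x]; nlinarith [h, hs, this]
  -- CS⁻¹ = S * HS⁻¹ * S
  have hCSinv : CS⁻¹ = S * HS⁻¹ * S := by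
    apply inv_eq_right_inv
    rw [hCS]
    calc S⁻¹ * HS * S⁻¹ * (S * HS⁻¹ * S)
        = S⁻¹ * (HS * ((S⁻¹ * S) * (HS⁻¹ * S))) := by
          simp only [Matrix.mul_assoc]
    _ = S⁻¹ * (HS * (HS⁻¹ * S)) := by rw [hSinv, Matrix.one_mul]
    _ = (S⁻¹ * S) := by rw [← Matrix.mul_assoc HS HS⁻¹ S, hHSinv', Matrix.one_mul]
    _ = 1 := hSinv
  -- key vector identity : M *ᵥ (S *ᵥ vne) = S *ᵥ (vne - vnsk)
  have hM1 : CS⁻¹ * (S * H⁻¹) = S * HS⁻¹ := by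
    rw [hCSinv]
    calc S * HS⁻¹ * S * (S * H⁻¹)
        = S * (HS⁻¹ * ((S * S) * H⁻¹)) := by simp only [Matrix.mul_assoc]
    _ = S * (HS⁻¹ * (H * H⁻¹)) := by rw [hSmul]
    _ = S * HS⁻¹ := by rw [hHinv', Matrix.mul_one]
  have hvec : M *ᵥ (S *ᵥ vne) = S *ᵥ (vne - vnsk) := by
    have h1 : CS⁻¹ *ᵥ (S *ᵥ vne) = S *ᵥ vnsk := by
      rw [hvne, hvnsk]
      simp only [mulVec_neg, mulVec_mulVec]
      rw [hM1]
    rw [hMdef, sub_mulVec, one_mulVec, h1, mulVec_sub]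
  -- quadratic form through S
  have hdotH : ∀ v : Fin d → ℝ, v ⬝ᵥ H *ᵥ v = (S *ᵥ v) ⬝ᵥ (S *ᵥ v) := by
    intro v
    rw [← hSmul, ← mulVec_mulVec, dotProduct_mulVec, ← mulVec_transpose, hSsym]
  -- main bound
  have hbound : (vne - vnsk) ⬝ᵥ (H *ᵥ (vne - vnsk)) ≤ ε^2 * (vne ⬝ᵥ (H *ᵥ vne)) := by
    rw [hdotH, hdotH, ← hvec]
    exact opnorm_bound' hMH hε0.le h_up h_low (S *ᵥ vne)
  have hnn : 0 ≤ (vne - vnsk) ⬝ᵥ (H *ᵥ (vne - vnsk)) := by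
    rw [hdotH]; exact dot_self_nonneg' _
  calc Real.sqrt ((vne - vnsk) ⬝ᵥ (H *ᵥ (vne - vnsk)))
      ≤ Real.sqrt (ε^2 * (vne ⬝ᵥ (H *ᵥ vne))) := Real.sqrt_le_sqrt hbound
  _ = ε * Real.sqrt (vne ⬝ᵥ (H *ᵥ vne)) := by
      rw [Real.sqrt_mul (sq_nonneg ε), Real.sqrt_sq hε0.le]
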